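/- A finite algebra (A, F) is a Ramsey algebra if and only if every nonempty subalgebra of (A, F) contains an idempotent element, i.e., an element a with f(a, a, ..., a) = a for all f ∈ F. -/

import Mathlib

namespace RamseyAlg

/- Orderly-term syntax trees over an operation-index type `ι`:
`leaf` is the identity (a single variable), `node g f` applies the basic
operation `g` to the results of the trees in the forest `f`. -/
mutual
  inductive OTree (ι : Type) : Type
    | leaf : OTree ι
    | node : ι → OForest ι → OTree ι
  inductive OForest (ι : Type) : Type
    | nil : OForest ι
    | cons : OTree ι → OForest ι → OForest ι
end

def OForest.length {ι : Type} : OForest ι → ℕ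
  | .nil => 0
  | .cons _ f => f.length + 1

/- Well-formedness: each node applies a `k`-ary basic operation to exactly
`k` subtrees, where `ar` gives the arities. -/
mutual
  def OTree.WF {ι : Type} (ar : ι → ℕ) : OTree ι → Prop
    | .leaf => True
    | .node g f => OForest.length f = ar g ∧ OForest.WF ar f
  def OForest.WF {ι : Type} (ar : ι → ℕ) : OForest ι → Prop
    | .nil => True
    | .cons t f => OTree.WF ar t ∧ OForest.WF ar f
end

/- Evaluation of an orderly term on an input list: the variables of the term
consume an initial segment of the list, in order, each exactly once; what
remains of the list is returned alongside the value. -/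
mutual
  def OTree.evalAux {ι A : Type} (F : ι → List A → A) :
      OTree ι → List A → Option (A × List A)
    | .leaf, [] => none
    | .leaf, a :: rest => some (a, rest)
    | .node g f, l =>
      match OForest.evalAux F f l with
      | none => none
      | some (rs, rest) => some (F g rs, rest)
  def OForest.evalAux {ι A : Type} (F : ι → List A → A) :
      OForest ι → List A → Option (List A × List A)
    | .nil, l => some ([], l)
    | .cons t f, l =>
      match OTree.evalAux F t l with
      | none => none
      | some (r, rest) =>
        match OForest.evalAux F f rest with
        | none => none
        | some (rs, rest') => some (r :: rs, rest')
end

/- The value of the orderly term `t` on the finite sequence `l`, defined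
exactly when the variables of `t` consume all of `l`. -/
def OTree.eval {ι A : Type} (F : ι → List A → A) (t : OTree ι) (l : List A) :
    Option A :=
  match OTree.evalAux F t l with
  | some (a, []) => some a
  | _ => none

/- `Reduction ar F a b` : `a` is a reduction of `b` with respect to `F`, i.e.
there are well-formed orderly terms `t j` applied to consecutive disjoint
finite subsequences of `b` (extracted by the strictly monotone `e`, in blocks
of lengths `len j`) producing the terms of `a` in order. -/
def Reduction {ι A : Type} (ar : ι → ℕ) (F : ι → List A → A)
    (a b : ℕ → A) : Prop :=
  ∃ (t : ℕ → OTree ι) (len : ℕ → ℕ) (e : ℕ → ℕ),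
    StrictMono e ∧ (∀ j, (t j).WF ar) ∧
    ∀ j, (t j).eval F ((List.range (len j)).map
        (fun i => b (e ((∑ m ∈ Finset.range j, len m) + i)))) = some (a j)

/- `FR ar F b` : the set of values of orderly terms over `F` applied to
finite subsequences of `b`. -/
def FR {ι A : Type} (ar : ι → ℕ) (F : ι → List A → A) (b : ℕ → A) : Set A :=
  { x | ∃ (t : OTree ι) (l : List ℕ), t.WF ar ∧ l.Chain' (· < ·) ∧
      t.eval F (l.map b) = some x }

/- `(A, F)` is a Ramsey algebra: every infinite sequence has, for every
`X ⊆ A`, a reduction homogeneous for `X`. -/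
def RamseyAlgebra {ι A : Type} (ar : ι → ℕ) (F : ι → List A → A) : Prop :=
  ∀ (b : ℕ → A) (X : Set A), ∃ a : ℕ → A,
    Reduction ar F a b ∧ (FR ar F a ⊆ X ∨ FR ar F a ∩ X = ∅)

end RamseyAlg


namespace RamseyAlg
set_option linter.unusedSectionVars false

variable {ι A : Type} {ar : ι → ℕ} (F : ι → List A → A)

/-! ### Appending to the input list -/

mutual
theorem OTree.evalAux_append :
    ∀ (t : OTree ι) (l r l' : List A) (v : A),
      OTree.evalAux F t l = some (v, r) →
      OTree.evalAux F t (l ++ l') = some (v, r ++ l')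
  | .leaf, l, r, l', v => by
    cases l with
    | nil => intro h; simp [OTree.evalAux] at h
    | cons a rest =>
      intro h
      simp [OTree.evalAux] at h ⊢
      exact ⟨h.1, by rw [h.2]⟩
  | .node g f, l, r, l', v => by
    intro h
    simp only [OTree.evalAux] at h ⊢
    rcases hf : OForest.evalAux F f l with _ | ⟨rs, rest⟩ <;> rw [hf] at h <;> simp at h
    rw [OForest.evalAux_append f l rest l' rs hf]
    simp [h.1, h.2]
theorem OForest.evalAux_append :
    ∀ (f : OForest ι) (l r l' : List A) (vs : List A),
      OForest.evalAux F f l = some (vs, r) →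
      OForest.evalAux F f (l ++ l') = some (vs, r ++ l')
  | .nil, l, r, l', vs => by
    intro h
    simp [OForest.evalAux] at h ⊢
    exact ⟨h.1, by rw [h.2]⟩
  | .cons t f, l, r, l', vs => by
    intro h
    simp only [OForest.evalAux] at h ⊢
    rcases ht : OTree.evalAux F t l with _ | ⟨v1, rest⟩ <;> rw [ht] at h <;> simp at h
    rcases hf : OForest.evalAux F f rest with _ | ⟨rs, rest'⟩ <;> rw [hf] at h <;> simp at h
    rw [OTree.evalAux_append t l rest l' v1 ht]
    simp [OForest.evalAux_append f rest rest' l' rs hf, h.1, h.2]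
end

theorem OTree.eval_eq_some {t : OTree ι} {l : List A} {v : A} :
    OTree.eval F t l = some v ↔ OTree.evalAux F t l = some (v, []) := by
  unfold OTree.eval
  rcases h : OTree.evalAux F t l with _ | ⟨w, r⟩
  · simp
  · cases r with
    | nil => simp
    | cons x xs => simp

/-! ### Values of well-formed terms on inputs from a subalgebra -/

section Subalg
variable (S : Set A)
    (hS : ∀ i (l : List A), l.length = ar i → (∀ x ∈ l, x ∈ S) → F i l ∈ S)

include hS

mutual
theorem OTree.evalAux_memS :
    ∀ (u : OTree ι), u.WF ar → ∀ (l : List A) (v : A) (rest : List A),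
      (∀ y ∈ l, y ∈ S) → OTree.evalAux F u l = some (v, rest) →
      v ∈ S ∧ ∀ y ∈ rest, y ∈ S
  | .leaf => by
    intro _ l v rest hl h
    cases l with
    | nil => simp [OTree.evalAux] at h
    | cons a tl =>
      simp [OTree.evalAux] at h
      refine ⟨h.1 ▸ hl a (by simp), fun y hy => hl y ?_⟩
      rw [← h.2] at hy; simp [hy]
  | .node g f => by
    intro hwf l v rest hl h
    simp only [OTree.evalAux] at h
    rcases hf : OForest.evalAux F f l with _ | ⟨rs, rest'⟩ <;> rw [hf] at h <;> simp at h
    obtain ⟨h1, h2, h3⟩ := OForest.evalAux_memS f hwf.2 l rs rest' hl hf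
    refine ⟨h.1 ▸ hS g rs (h2.trans hwf.1) h1, ?_⟩
    rw [← h.2]; exact h3
theorem OForest.evalAux_memS :
    ∀ (f : OForest ι), f.WF ar → ∀ (l : List A) (vs : List A) (rest : List A),
      (∀ y ∈ l, y ∈ S) → OForest.evalAux F f l = some (vs, rest) →
      (∀ v ∈ vs, v ∈ S) ∧ vs.length = OForest.length f ∧ ∀ y ∈ rest, y ∈ S
  | .nil => by
    intro _ l vs rest hl h
    simp only [OForest.evalAux, Option.some.injEq, Prod.mk.injEq] at h
    obtain ⟨h1, h2⟩ := h
    subst h1; subst h2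
    exact ⟨by simp, rfl, hl⟩
  | .cons t f => by
    intro hwf l vs rest hl h
    simp only [OForest.evalAux] at h
    rcases ht : OTree.evalAux F t l with _ | ⟨v1, rest1⟩ <;> rw [ht] at h <;> simp at h
    rcases hf : OForest.evalAux F f rest1 with _ | ⟨rs, rest'⟩ <;> rw [hf] at h <;> simp at h
    obtain ⟨h1, h2⟩ := OTree.evalAux_memS t hwf.1 l v1 rest1 hl ht
    obtain ⟨h3, h4, h5⟩ := OForest.evalAux_memS f hwf.2 rest1 rs rest' h2 hf
    refine ⟨?_, ?_, ?_⟩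
    · rw [← h.1]; intro v hv
      rcases List.mem_cons.1 hv with h' | h'
      · exact h' ▸ h1
      · exact h3 v h'
    · rw [← h.1]; simp [OForest.length, h4]
    · rw [← h.2]; exact h5
end

end Subalg

/-- Members of `FR` lie in any subalgebra containing the range of `b`. -/
theorem FR_subset_subalg (S : Set A)
    (hS : ∀ i (l : List A), l.length = ar i → (∀ x ∈ l, x ∈ S) → F i l ∈ S)
    (b : ℕ → A) (hb : ∀ n, b n ∈ S) : FR ar F b ⊆ S := by
  rintro x ⟨t, l, hwf, _, hev⟩
  rw [OTree.eval_eq_some] at hev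
  exact (OTree.evalAux_memS F S hS t hwf (l.map b) x []
    (by intro y hy; rcases List.mem_map.1 hy with ⟨n, _, rfl⟩; exact hb n) hev).1

/-! ### Strings of leaves -/

def leafForest : ℕ → OForest ι
  | 0 => .nil
  | k + 1 => .cons .leaf (leafForest k)

theorem leafForest_WF : ∀ k, (leafForest (ι := ι) k).WF ar
  | 0 => trivial
  | k + 1 => ⟨trivial, leafForest_WF k⟩

theorem leafForest_length : ∀ k, (leafForest (ι := ι) k).length = k
  | 0 => rfl
  | k + 1 => by simp [leafForest, OForest.length, leafForest_length k]

theorem leafForest_evalAux :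
    ∀ (k : ℕ) (l r : List A), l.length = k →
      OForest.evalAux F (leafForest k) (l ++ r) = some (l, r)
  | 0, l, r => by
    intro h
    rw [List.length_eq_zero_iff] at h
    subst h
    simp [leafForest, OForest.evalAux]
  | k + 1, l, r => by
    intro h
    cases l with
    | nil => simp at h
    | cons a tl =>
      simp at h
      simp only [leafForest, OForest.evalAux, List.cons_append, OTree.evalAux]
      rw [leafForest_evalAux k tl r h]

/-! ### Substitution: FR is monotone under reduction -/

section Subst
variable (a b : ℕ → A) (t : ℕ → OTree ι) (blk : ℕ → List ℕ)
  (hwf : ∀ j, (t j).WF ar)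
  (hev : ∀ j, OTree.evalAux F (t j) ((blk j).map b) = some (a j, []))

include hwf hev

mutual
theorem subst_tree :
    ∀ (u : OTree ι), u.WF ar → ∀ (l : List ℕ) (v : A) (rest : List A),
      OTree.evalAux F u (l.map a) = some (v, rest) →
      ∃ l1 l2 : List ℕ, l = l1 ++ l2 ∧ rest = l2.map a ∧
        ∃ u' : OTree ι, u'.WF ar ∧
          OTree.evalAux F u' (((l1.map blk).flatten).map b) = some (v, [])
  | .leaf => by
    intro _ l v rest h
    cases l with
    | nil => simp [OTree.evalAux] at h
    | cons j l2 =>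
      simp [OTree.evalAux] at h
      refine ⟨[j], l2, rfl, h.2.symm, t j, hwf j, ?_⟩
      have := hev j
      rw [h.1] at this
      simpa using this
  | .node g f => by
    intro hu l v rest h
    simp only [OTree.evalAux] at h
    rcases hf : OForest.evalAux F f (l.map a) with _ | ⟨rs, rest'⟩ <;> rw [hf] at h <;> simp at h
    obtain ⟨l1, l2, rfl, hrest, f', hw', hlen', hev'⟩ := subst_forest f hu.2 l rs rest' hf
    refine ⟨l1, l2, rfl, by rw [← h.2]; exact hrest, .node g f', ⟨hlen'.trans hu.1, hw'⟩, ?_⟩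
    simp only [OTree.evalAux]
    rw [hev']
    simp [h.1]
theorem subst_forest :
    ∀ (f : OForest ι), f.WF ar → ∀ (l : List ℕ) (vs : List A) (rest : List A),
      OForest.evalAux F f (l.map a) = some (vs, rest) →
      ∃ l1 l2 : List ℕ, l = l1 ++ l2 ∧ rest = l2.map a ∧
        ∃ f' : OForest ι, f'.WF ar ∧ f'.length = f.length ∧
          OForest.evalAux F f' (((l1.map blk).flatten).map b) = some (vs, [])
  | .nil => by
    intro _ l vs rest h
    simp only [OForest.evalAux, Option.some.injEq, Prod.mk.injEq] at h
    obtain ⟨h1, h2⟩ := h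
    subst h1; subst h2
    exact ⟨[], l, rfl, rfl, .nil, trivial, rfl, by simp [OForest.evalAux]⟩
  | .cons u f => by
    intro hwfc l vs rest h
    simp only [OForest.evalAux] at h
    rcases ht : OTree.evalAux F u (l.map a) with _ | ⟨v1, rest1⟩ <;> rw [ht] at h <;> simp at h
    rcases hfz : OForest.evalAux F f rest1 with _ | ⟨rs, rest'⟩ <;> rw [hfz] at h <;> simp at h
    obtain ⟨l1, l2, rfl, hrest1, u', hwu', hevu'⟩ := subst_tree u hwfc.1 l v1 rest1 ht
    rw [hrest1] at hfz
    obtain ⟨l3, l4, rfl, hrest, f', hwf', hlen', hevf'⟩ := subst_forest f hwfc.2 l2 rs rest' hfz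
    refine ⟨l1 ++ l3, l4, by rw [List.append_assoc], by rw [← h.2]; exact hrest,
      .cons u' f', ⟨hwu', hwf'⟩, by simp [OForest.length, hlen'], ?_⟩
    simp only [OForest.evalAux]
    have hsplit : ((((l1 ++ l3).map blk).flatten).map b : List A)
        = ((l1.map blk).flatten).map b ++ ((l3.map blk).flatten).map b := by
      simp
    rw [hsplit, OTree.evalAux_append F u' _ [] _ v1 hevu']
    simp only [List.nil_append]
    rw [hevf']
    simp [h.1]
end

end Subst

theorem FR_mono {a b : ℕ → A} (h : Reduction ar F a b) :
    FR ar F a ⊆ FR ar F b := by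
  obtain ⟨t, len, e, he, hwf, hev⟩ := h
  set blk : ℕ → List ℕ :=
    fun j => (List.range (len j)).map
      (fun i => e ((∑ m ∈ Finset.range j, len m) + i)) with hblk
  have hev' : ∀ j, OTree.evalAux F (t j) ((blk j).map b) = some (a j, []) := by
    intro j
    rw [← OTree.eval_eq_some]
    have := hev j
    rw [hblk]
    simpa [List.map_map, Function.comp_def] using this
  rintro x ⟨u, l, hu, hchain, hx⟩
  rw [OTree.eval_eq_some] at hx
  obtain ⟨l1, l2, rfl, hl2, u', hwu', hevu'⟩ :=
    subst_tree F a b t blk hwf hev' u hu l x [] hx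
  have hl2nil : l2 = [] := by
    cases l2 with
    | nil => rfl
    | cons p q => simp at hl2
  subst hl2nil
  simp only [List.append_nil] at hchain
  refine ⟨u', (l1.map blk).flatten, hwu', ?_, (OTree.eval_eq_some F).2 hevu'⟩
  simp only [List.Chain', List.isChain_iff_pairwise] at hchain ⊢
  rw [List.pairwise_flatten]
  constructor
  · intro L hL
    rcases List.mem_map.1 hL with ⟨j, _, rfl⟩
    rw [hblk, List.pairwise_map]
    exact (List.pairwise_lt_range (n := _)).imp (fun hij => he (by omega))
  · rw [List.pairwise_map]
    refine hchain.imp ?_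
    intro j j' hjj' p hp q hq
    rw [hblk] at hp hq
    simp only [List.mem_map, List.mem_range] at hp hq
    obtain ⟨i, hi, rfl⟩ := hp
    obtain ⟨i', hi', rfl⟩ := hq
    apply he
    have h1 : (∑ m ∈ Finset.range j, len m) + i < ∑ m ∈ Finset.range (j + 1), len m := by
      rw [Finset.sum_range_succ]; omega
    have h2 : (∑ m ∈ Finset.range (j + 1), len m) ≤ ∑ m ∈ Finset.range j', len m :=
      Finset.sum_le_sum_of_subset (Finset.range_subset_range.2 hjj')
    omega

/-! ### Miscellaneous facts about FR -/

theorem self_mem_FR (b : ℕ → A) (n : ℕ) : b n ∈ FR ar F b :=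
  ⟨.leaf, [n], trivial, by simp [List.Chain'],
    by rw [OTree.eval_eq_some]; simp [OTree.evalAux]⟩

/-- Building a forest evaluating to a given list of elements generated from `c`. -/
theorem exists_forest (c : A) :
    ∀ (l : List A),
      (∀ x ∈ l, ∃ (u : OTree ι) (n : ℕ), u.WF ar ∧
        OTree.evalAux F u (List.replicate n c) = some (x, [])) →
      ∃ (f : OForest ι) (n : ℕ), f.WF ar ∧ f.length = l.length ∧
        ∀ r : List A, OForest.evalAux F f (List.replicate n c ++ r) = some (l, r)
  | [] => fun _ => ⟨.nil, 0, trivial, rfl, fun r => by simp [OForest.evalAux]⟩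
  | x :: l => fun h => by
    obtain ⟨u, n1, hu, hue⟩ := h x (by simp)
    obtain ⟨f, n2, hf, hflen, hfe⟩ := exists_forest c l (fun y hy => h y (by simp [hy]))
    refine ⟨.cons u f, n1 + n2, ⟨hu, hf⟩, by simp [OForest.length, hflen], fun r => ?_⟩
    simp only [OForest.evalAux]
    have hsp : List.replicate (n1 + n2) c ++ r
        = List.replicate n1 c ++ (List.replicate n2 c ++ r) := by
      rw [← List.append_assoc, ← List.replicate_add]
    rw [hsp, OTree.evalAux_append F u _ [] _ x hue]
    simp only [List.nil_append]
    rw [hfe r]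

end RamseyAlg


open RamseyAlg in
/-- A finite algebra `(A, F)` is a Ramsey algebra iff every nonempty
subalgebra contains an idempotent element, i.e. some `a` with
`f(a, ..., a) = a` for every `f ∈ F`. -/
theorem stmt15 (ι A : Type) [Finite A] (ar : ι → ℕ) (F : ι → List A → A) :
    RamseyAlgebra ar F ↔
      ∀ S : Set A,
        (∀ i (l : List A), l.length = ar i → (∀ x ∈ l, x ∈ S) → F i l ∈ S) →
        S.Nonempty →
        ∃ a ∈ S, ∀ i, F i (List.replicate (ar i) a) = a := by
  classical
  constructor
  · -- Ramsey → idempotents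
    rintro hram S hS ⟨c, hc⟩
    have : Fintype (Set A) := Fintype.ofFinite _
    have iter : ∀ (Xs : List (Set A)) (b : ℕ → A),
        ∃ a : ℕ → A, FR ar F a ⊆ FR ar F b ∧
          ∀ X ∈ Xs, FR ar F a ⊆ X ∨ FR ar F a ∩ X = ∅ := by
      intro Xs
      induction Xs with
      | nil => intro b; exact ⟨b, subset_rfl, by simp⟩
      | cons X Xs ih =>
        intro b
        obtain ⟨a1, hsub1, hhom1⟩ := ih b
        obtain ⟨a2, hred2, hhom2⟩ := hram a1 X
        have hsub2 : FR ar F a2 ⊆ FR ar F a1 := FR_mono F hred2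
        refine ⟨a2, hsub2.trans hsub1, ?_⟩
        intro Y hY
        rcases List.mem_cons.1 hY with rfl | hY
        · exact hhom2
        · rcases hhom1 Y hY with h | h
          · exact Or.inl (hsub2.trans h)
          · refine Or.inr (Set.eq_empty_of_subset_empty ?_)
            rw [← h]
            exact Set.inter_subset_inter_left _ hsub2
    obtain ⟨a, hsub, hhom⟩ := iter Finset.univ.toList (fun _ => c)
    have hx0 : a 0 ∈ FR ar F a := self_mem_FR F a 0
    have hsing : FR ar F a ⊆ {a 0} := by
      rcases hhom {a 0} (Finset.mem_toList.2 (Finset.mem_univ _)) with h | h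
      · exact h
      · exact absurd (h ▸ Set.mem_inter hx0 (Set.mem_singleton _)) (Set.notMem_empty _)
    have haconst : ∀ j, a j = a 0 := fun j => hsing (self_mem_FR F a j)
    have hmemS : a 0 ∈ S := by
      apply FR_subset_subalg F S hS (fun _ => c) (fun _ => hc)
      exact hsub hx0
    refine ⟨a 0, hmemS, fun i => ?_⟩
    have hFR : F i (List.replicate (ar i) (a 0)) ∈ FR ar F a := by
      refine ⟨.node i (leafForest (ar i)), List.range (ar i),
        ⟨leafForest_length _, leafForest_WF _⟩, ?_, ?_⟩
      · simp only [List.Chain', List.isChain_iff_pairwise]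
        exact List.pairwise_lt_range (n := _)
      · rw [OTree.eval_eq_some]
        simp only [OTree.evalAux]
        have hmap : (List.range (ar i)).map a = List.replicate (ar i) (a 0) := by
          rw [List.eq_replicate_iff]
          refine ⟨by simp, fun y hy => ?_⟩
          rcases List.mem_map.1 hy with ⟨j, _, rfl⟩
          exact haconst j
        rw [hmap]
        have := leafForest_evalAux F (ar i) (List.replicate (ar i) (a 0)) []
          (by simp)
        rw [List.append_nil] at this
        rw [this]
    exact hsing hFR
  · -- idempotents → Ramsey
    intro hid b X
    obtain ⟨c, hc⟩ := Finite.exists_infinite_fiber b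
    set Sc : Set A := {x | ∃ (u : OTree ι) (n : ℕ), u.WF ar ∧
      OTree.evalAux F u (List.replicate n c) = some (x, [])} with hSc
    have hclosed : ∀ i (l : List A), l.length = ar i →
        (∀ x ∈ l, x ∈ Sc) → F i l ∈ Sc := by
      intro i l hlen hl
      obtain ⟨f, n, hf, hflen, hfe⟩ := exists_forest F c l hl
      refine ⟨.node i f, n, ⟨hflen.trans hlen, hf⟩, ?_⟩
      simp only [OTree.evalAux]
      have := hfe []
      rw [List.append_nil] at this
      rw [this]
    have hcS : c ∈ Sc := ⟨.leaf, 1, trivial, by simp [OTree.evalAux]⟩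
    obtain ⟨x, hxSc, hxid⟩ := hid Sc hclosed ⟨c, hcS⟩
    obtain ⟨u, n, hu, hue⟩ := hxSc
    haveI : Infinite (b ⁻¹' {c} : Set ℕ) := hc
    set eo := Nat.Subtype.orderIsoOfNat (b ⁻¹' {c}) with heo
    set e : ℕ → ℕ := fun k => ((eo k : (b ⁻¹' {c} : Set ℕ)) : ℕ) with he_def
    have he : StrictMono e := fun k1 k2 h => eo.strictMono h
    have hbe : ∀ k, b (e k) = c := fun k => (eo k).2
    refine ⟨fun _ => x, ⟨fun _ => u, fun _ => n, e, he, fun _ => hu, fun j => ?_⟩, ?_⟩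
    · rw [OTree.eval_eq_some]
      have hmap : (List.range n).map
          (fun i => b (e ((∑ m ∈ Finset.range j, (fun _ => n) m) + i)))
          = List.replicate n c := by
        rw [List.eq_replicate_iff]
        refine ⟨by simp, fun y hy => ?_⟩
        rcases List.mem_map.1 hy with ⟨i, _, rfl⟩
        exact hbe _
      rw [hmap]
      exact hue
    · have hsub : FR ar F (fun _ => x) ⊆ {x} := by
        refine FR_subset_subalg F {x} ?_ _ (fun _ => rfl)
        intro i l hlen hl
        have hrep : l = List.replicate (ar i) x :=
          List.eq_replicate_iff.2 ⟨hlen, fun y hy => hl y hy⟩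
        rw [hrep]
        exact hxid i
      by_cases hxX : x ∈ X
      · refine Or.inl (fun y hy => ?_)
        have := hsub hy
        rw [Set.mem_singleton_iff] at this
        rw [this]
        exact hxX
      · refine Or.inr (Set.eq_empty_of_subset_empty ?_)
        rintro y ⟨hy1, hy2⟩
        have := hsub hy1
        rw [Set.mem_singleton_iff] at this
        rw [this] at hy2
        exact absurd hy2 hxX
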